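/- Let H be a complex Hilbert space and let a, a′, b, b′ be orthogonal projections on H (bounded self-adjoint idempotents) such that each of a, a′ commutes with each of b, b′. Set P = a + b + a′b′ − ab − ab′ − a′b (a bounded self-adjoint operator). If both P and 1 − P are positive operators (that is, ⟨ψ, Pψ⟩ ≥ 0 and ⟨ψ, (1−P)ψ⟩ ≥ 0 for all ψ ∈ H), then the operator (aa′ − a′a)(bb′ − b′b) is positive, i.e. ⟨ψ, (aa′ − a′a)(bb′ − b′b)ψ⟩ ≥ 0 for all ψ ∈ H. -/

import Mathlib

open scoped InnerProductSpace ComplexOrder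

lemma ring_key {R : Type*} [Ring R] (a a' b b' : R)
    (haidem : a * a = a) (ha'idem : a' * a' = a')
    (hbidem : b * b = b) (hb'idem : b' * b' = b')
    (hab : a * b = b * a) (hab' : a * b' = b' * a)
    (ha'b : a' * b = b * a') (ha'b' : a' * b' = b' * a') :
    (a + b + a' * b' - a * b - a * b' - a' * b) *
      (1 - (a + b + a' * b' - a * b - a * b' - a' * b)) =
      (a * a' - a' * a) * (b * b' - b' * b) := by
  have h1 : ∀ x : R, b * (a * x) = a * (b * x) := fun x => by
    rw [← mul_assoc, ← hab, mul_assoc]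
  have h2 : ∀ x : R, b' * (a * x) = a * (b' * x) := fun x => by
    rw [← mul_assoc, ← hab', mul_assoc]
  have h3 : ∀ x : R, b * (a' * x) = a' * (b * x) := fun x => by
    rw [← mul_assoc, ← ha'b, mul_assoc]
  have h4 : ∀ x : R, b' * (a' * x) = a' * (b' * x) := fun x => by
    rw [← mul_assoc, ← ha'b', mul_assoc]
  have i1 : ∀ x : R, a * (a * x) = a * x := fun x => by rw [← mul_assoc, haidem]
  have i2 : ∀ x : R, a' * (a' * x) = a' * x := fun x => by rw [← mul_assoc, ha'idem]
  have i3 : ∀ x : R, b * (b * x) = b * x := fun x => by rw [← mul_assoc, hbidem]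
  have i4 : ∀ x : R, b' * (b' * x) = b' * x := fun x => by rw [← mul_assoc, hb'idem]
  simp only [mul_sub, sub_mul, mul_add, add_mul, one_mul, mul_one, mul_assoc,
    ← hab, ← hab', ← ha'b, ← ha'b', h1, h2, h3, h4, i1, i2, i3, i4,
    haidem, ha'idem, hbidem, hb'idem]
  abel

lemma clm_nonneg_iff_inner {H : Type*} [NormedAddCommGroup H] [InnerProductSpace ℂ H]
    [CompleteSpace H] (T : H →L[ℂ] H) : 0 ≤ T ↔ ∀ x : H, 0 ≤ ⟪x, T x⟫_ℂ := by
  rw [ContinuousLinearMap.nonneg_iff_isPositive, ContinuousLinearMap.isPositive_iff_complex]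
  constructor
  · intro h x
    obtain ⟨h1, h2⟩ := h x
    rw [← inner_conj_symm, ← h1, Complex.conj_ofReal]
    exact_mod_cast h2
  · intro h x
    have hx := h x
    rw [Complex.le_def] at hx
    simp only [Complex.zero_re, Complex.zero_im] at hx
    have him : ⟪T x, x⟫_ℂ = (starRingEnd ℂ) ⟪x, T x⟫_ℂ := (inner_conj_symm (T x) x).symm
    have him2 : (⟪T x, x⟫_ℂ).im = 0 := by rw [him, Complex.conj_im, ← hx.2, neg_zero]
    have hre : (⟪T x, x⟫_ℂ).re = (⟪x, T x⟫_ℂ).re := by rw [him, Complex.conj_re]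
    refine ⟨?_, ?_⟩
    · apply Complex.ext <;> simp [him2]
    · simp only [RCLike.re_to_complex]
      rw [hre]; exact hx.1

theorem commutator_product_positive_of_P_and_one_sub_P_positive
    {H : Type*} [NormedAddCommGroup H] [InnerProductSpace ℂ H] [CompleteSpace H]
    (a a' b b' : H →L[ℂ] H)
    (ha : IsSelfAdjoint a) (ha' : IsSelfAdjoint a')
    (hb : IsSelfAdjoint b) (hb' : IsSelfAdjoint b')
    (haidem : a * a = a) (ha'idem : a' * a' = a')
    (hbidem : b * b = b) (hb'idem : b' * b' = b')
    (hab : a * b = b * a) (hab' : a * b' = b' * a)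
    (ha'b : a' * b = b * a') (ha'b' : a' * b' = b' * a')
    (P : H →L[ℂ] H) (hP : P = a + b + a' * b' - a * b - a * b' - a' * b)
    (hPpos : ∀ ψ : H, 0 ≤ ⟪ψ, P ψ⟫_ℂ)
    (hPpos' : ∀ ψ : H, 0 ≤ ⟪ψ, (1 - P) ψ⟫_ℂ) :
    ∀ ψ : H, 0 ≤ ⟪ψ, ((a * a' - a' * a) * (b * b' - b' * b)) ψ⟫_ℂ := by
  have hP0 : (0 : H →L[ℂ] H) ≤ P := (clm_nonneg_iff_inner P).mpr hPpos
  have hQ0 : (0 : H →L[ℂ] H) ≤ 1 - P := (clm_nonneg_iff_inner (1 - P)).mpr hPpos'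
  set s : H →L[ℂ] H := CFC.sqrt P with hs
  have hss : s * s = P := CFC.sqrt_mul_sqrt_self P hP0
  have hsnn : (0 : H →L[ℂ] H) ≤ s := CFC.sqrt_nonneg P
  have hssa : IsSelfAdjoint s := IsSelfAdjoint.of_nonneg hsnn
  have hcomm : s * (1 - P) = (1 - P) * s := by
    rw [← hss]; noncomm_ring
  have hprod : (0 : H →L[ℂ] H) ≤ P * (1 - P) := by
    have heq : star s * (1 - P) * s = P * (1 - P) := by
      rw [hssa.star_eq, hcomm, mul_assoc, hss]
      noncomm_ring
    rw [← heq]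
    exact star_left_conjugate_nonneg hQ0 s
  have hkey : P * (1 - P) = (a * a' - a' * a) * (b * b' - b' * b) := by
    rw [hP]
    exact ring_key a a' b b' haidem ha'idem hbidem hb'idem hab hab' ha'b ha'b'
  rw [hkey] at hprod
  exact (clm_nonneg_iff_inner _).mp hprod
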